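/- arXiv:quant-ph/9811074 — 2 statements merged into one kernel-verified Lean document; each statement's English description precedes it below -/
import Mathlib

section
/- Objectivity theorem (two-channel pure-state version): let Φ = c₁(φ₁⊗ψ₁) + c₂(φ₂⊗ψ₂) with (φᵢ), (ψᵢ) orthonormal pairs and |c₁|²+|c₂|²=1, and let A, B be observables with 0 ≤ A ≤ 1, 0 ≤ B ≤ 1, ⟨φᵢ,Aφᵢ⟩ = δ_{i1}, ⟨ψᵢ,Bψᵢ⟩ = δ_{i1}. Then ⟨Φ, (A ⊗ (1−B)) Φ⟩ = 0 and ⟨Φ, ((1−A) ⊗ B) Φ⟩ = 0, i.e. the two readings agree with probability one. -/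
open scoped InnerProductSpace

lemma pos_inner_zero {H : Type*} [NormedAddCommGroup H] [InnerProductSpace ℂ H]
    [CompleteSpace H]
    (T : H →L[ℂ] H) (hT : T.IsPositive) {y : H} (hy : ⟪y, T y⟫_ℂ = 0) (x : H) :
    ⟪x, T y⟫_ℂ = 0 := by
  letI c : PreInnerProductSpace.Core ℂ H :=
  { inner := fun a b => ⟪a, T b⟫_ℂ
    conj_inner_symm := fun a b => by
      show (starRingEnd ℂ) ⟪b, T a⟫_ℂ = ⟪a, T b⟫_ℂ
      rw [inner_conj_symm]
      exact hT.isSelfAdjoint.isSymmetric a b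
    re_inner_nonneg := fun a => (RCLike.nonneg_iff.mp (hT.inner_nonneg_right a)).1
    add_left := fun a b z => inner_add_left a b (T z)
    smul_left := fun a b r => inner_smul_left a (T b) r }
  have key := @InnerProductSpace.Core.inner_mul_inner_self_le ℂ H _ _ _ c x y
  have hyy : RCLike.re (c.inner y y) = 0 := by
    show RCLike.re (⟪y, T y⟫_ℂ) = 0
    rw [hy]; simp
  have hsym : ‖c.inner y x‖ = ‖c.inner x y‖ := by
    show ‖⟪y, T x⟫_ℂ‖ = ‖⟪x, T y⟫_ℂ‖
    rw [norm_inner_symm]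
    congr 1
    exact hT.isSelfAdjoint.isSymmetric x y
  rw [hsym, hyy, mul_zero] at key
  have : ‖c.inner x y‖ = 0 := by nlinarith [norm_nonneg (c.inner x y)]
  exact norm_eq_zero.mp this

/-- Theorem 3 (Objectivity) of the paper in the two-channel pure-state model.
The Hilbert tensor product is represented by a Hilbert space `K` with elementary
tensors `tp : H₁ → H₂ → K`; the operators `A ⊗ (1−B)` and `(1−A) ⊗ B` are
represented by `T₁`, `T₂ : K →L[ℂ] K`, characterized by their matrix elements on
elementary tensors. The two discriminating readings agree with probability one. -/
theorem stmt10 {H₁ H₂ K : Type*}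
    [NormedAddCommGroup H₁] [InnerProductSpace ℂ H₁] [CompleteSpace H₁]
    [NormedAddCommGroup H₂] [InnerProductSpace ℂ H₂] [CompleteSpace H₂]
    [NormedAddCommGroup K] [InnerProductSpace ℂ K] [CompleteSpace K]
    (φ₁ φ₂ : H₁) (hφ₁ : ‖φ₁‖ = 1) (hφ₂ : ‖φ₂‖ = 1) (hφ : ⟪φ₁, φ₂⟫_ℂ = 0)
    (ψ₁ ψ₂ : H₂) (hψ₁ : ‖ψ₁‖ = 1) (hψ₂ : ‖ψ₂‖ = 1) (hψ : ⟪ψ₁, ψ₂⟫_ℂ = 0)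
    (c₁ c₂ : ℂ) (hc : ‖c₁‖ ^ 2 + ‖c₂‖ ^ 2 = 1)
    (A : H₁ →L[ℂ] H₁) (hA : A.IsPositive) (hA1 : (1 - A).IsPositive)
    (B : H₂ →L[ℂ] H₂) (hB : B.IsPositive) (hB1 : (1 - B).IsPositive)
    (hAφ₁ : ⟪φ₁, A φ₁⟫_ℂ = 1) (hAφ₂ : ⟪φ₂, A φ₂⟫_ℂ = 0)
    (hBψ₁ : ⟪ψ₁, B ψ₁⟫_ℂ = 1) (hBψ₂ : ⟪ψ₂, B ψ₂⟫_ℂ = 0)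
    (tp : H₁ → H₂ → K)
    (T₁ T₂ : K →L[ℂ] K)
    (hT₁ : ∀ (x x' : H₁) (y y' : H₂),
      ⟪tp x y, T₁ (tp x' y')⟫_ℂ = ⟪x, A x'⟫_ℂ * (⟪y, y'⟫_ℂ - ⟪y, B y'⟫_ℂ))
    (hT₂ : ∀ (x x' : H₁) (y y' : H₂),
      ⟪tp x y, T₂ (tp x' y')⟫_ℂ = (⟪x, x'⟫_ℂ - ⟪x, A x'⟫_ℂ) * ⟪y, B y'⟫_ℂ)
    (Φ : K) (hΦ : Φ = c₁ • tp φ₁ ψ₁ + c₂ • tp φ₂ ψ₂) :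
    ⟪Φ, T₁ Φ⟫_ℂ = 0 ∧ ⟪Φ, T₂ Φ⟫_ℂ = 0 := by
  have hφ₁s : ⟪φ₁, φ₁⟫_ℂ = 1 := by
    rw [inner_self_eq_norm_sq_to_K, hφ₁]; norm_num
  have hφ₂s : ⟪φ₂, φ₂⟫_ℂ = 1 := by
    rw [inner_self_eq_norm_sq_to_K, hφ₂]; norm_num
  have hψ₁s : ⟪ψ₁, ψ₁⟫_ℂ = 1 := by
    rw [inner_self_eq_norm_sq_to_K, hψ₁]; norm_num
  have hψ₂s : ⟪ψ₂, ψ₂⟫_ℂ = 1 := by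
    rw [inner_self_eq_norm_sq_to_K, hψ₂]; norm_num
  have hφ' : ⟪φ₂, φ₁⟫_ℂ = 0 := by rw [← inner_conj_symm, hφ]; simp
  have hψ' : ⟪ψ₂, ψ₁⟫_ℂ = 0 := by rw [← inner_conj_symm, hψ]; simp
  -- A φ₂ has zero cross terms
  have hA12 : ⟪φ₁, A φ₂⟫_ℂ = 0 := pos_inner_zero A hA hAφ₂ φ₁
  have hB12 : ⟪ψ₁, B ψ₂⟫_ℂ = 0 := pos_inner_zero B hB hBψ₂ ψ₁
  -- (1-A) φ₁ = 0 in quadratic form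
  have h1A : ⟪φ₁, (1 - A) φ₁⟫_ℂ = 0 := by
    simp [ContinuousLinearMap.sub_apply, inner_sub_right, hφ₁s, hAφ₁, hφ₁]
  have h1B : ⟪ψ₁, (1 - B) ψ₁⟫_ℂ = 0 := by
    simp [ContinuousLinearMap.sub_apply, inner_sub_right, hψ₁s, hBψ₁, hψ₁]
  have hA21' : ⟪φ₂, (1 - A) φ₁⟫_ℂ = 0 := pos_inner_zero (1 - A) hA1 h1A φ₂
  have hB21' : ⟪ψ₂, (1 - B) ψ₁⟫_ℂ = 0 := pos_inner_zero (1 - B) hB1 h1B ψ₂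
  have hA21 : ⟪φ₂, A φ₁⟫_ℂ = 0 := by
    have := hA21'
    simp only [ContinuousLinearMap.sub_apply, ContinuousLinearMap.one_apply,
      inner_sub_right, hφ'] at this
    linear_combination -this
  have hB21 : ⟪ψ₂, B ψ₁⟫_ℂ = 0 := by
    have := hB21'
    simp only [ContinuousLinearMap.sub_apply, ContinuousLinearMap.one_apply,
      inner_sub_right, hψ'] at this
    linear_combination -this
  subst hΦ
  constructor
  · simp only [map_add, map_smul, inner_add_left, inner_add_right, inner_smul_left,
      inner_smul_right, hT₁, hAφ₁, hAφ₂, hA12, hA21, hψ₁s, hψ₂s, hψ, hψ', hBψ₁, hBψ₂,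
      hB12, hB21]
    ring
  · simp only [map_add, map_smul, inner_add_left, inner_add_right, inner_smul_left,
      inner_smul_right, hT₂, hAφ₁, hAφ₂, hA12, hA21, hφ₁s, hφ₂s, hφ, hφ', hBψ₁, hBψ₂,
      hB12, hB21]
    ring
end

section
/- Insensitivity to interference of an extreme-valued observable: if 0 ≤ A ≤ 1 and ⟨φ₁, A φ₁⟩ ∈ {0, 1} for a unit vector φ₁, then for φ₂ orthonormal to φ₁ and any c₁ c₂ with |c₁|²+|c₂|²=1, ⟨c₁φ₁+c₂φ₂, A (c₁φ₁+c₂φ₂)⟩ = |c₁|²⟨φ₁,Aφ₁⟩ + |c₂|²⟨φ₂,Aφ₂⟩. -/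
open scoped InnerProductSpace
open ComplexConjugate

lemma pos_apply_eq_zero {H : Type*} [NormedAddCommGroup H] [InnerProductSpace ℂ H]
    [CompleteSpace H] (T : H →L[ℂ] H) (hT : T.IsPositive) (x : H)
    (hx : ⟪x, T x⟫_ℂ = 0) : T x = 0 := by
  set y := T x with hy
  have hsym : ∀ u v : H, ⟪T u, v⟫_ℂ = ⟪u, T v⟫_ℂ := fun u v => hT.1 u v
  have hx' : ⟪T x, x⟫_ℂ = 0 := by rw [hsym, hx]
  have hC : 0 ≤ (⟪T y, y⟫_ℂ).re := (Complex.nonneg_iff.mp (hT.inner_nonneg_left y)).1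
  have key : ∀ t : ℝ, 0 ≤ 2 * t * ‖y‖ ^ 2 + t ^ 2 * (⟪T y, y⟫_ℂ).re := by
    intro t
    have h := hT.inner_nonneg_left (x + (t : ℂ) • y)
    have hyx : ⟪T y, x⟫_ℂ = conj ⟪T x, y⟫_ℂ := by
      rw [hsym x y]; exact (inner_conj_symm _ _).symm
    have hTxy : ⟪T x, y⟫_ℂ = ((‖y‖ ^ 2 : ℝ) : ℂ) := by
      rw [← hy, inner_self_eq_norm_sq_to_K]; norm_cast
    have hexp : ⟪T (x + (t : ℂ) • y), x + (t : ℂ) • y⟫_ℂ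
        = (t : ℂ) * ((‖y‖ ^ 2 : ℝ) : ℂ) + (t : ℂ) * conj (((‖y‖ ^ 2 : ℝ) : ℂ))
          + (t : ℂ) * (t : ℂ) * ⟪T y, y⟫_ℂ := by
      rw [map_add, map_smul]
      simp only [inner_add_left, inner_add_right, inner_smul_left, inner_smul_right,
        hx', Complex.conj_ofReal, hyx, hTxy]
      ring
    rw [hexp] at h
    have h2 : (0:ℝ) ≤ t * ‖y‖ ^ 2 + t * ‖y‖ ^ 2 + t * t * (⟪T y, y⟫_ℂ).re := by
      simpa [Complex.add_re, Complex.mul_re, Complex.conj_ofReal, ← Complex.ofReal_pow] using (Complex.nonneg_iff.mp h).1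
    nlinarith [h2]
  have hy0 : ‖y‖ ^ 2 ≤ 0 := by
    by_contra hpos
    push_neg at hpos
    set a := ‖y‖ ^ 2 with ha
    set C := (⟪T y, y⟫_ℂ).re with hCdef
    have hk := key (-a / (C + 1))
    have hC1 : 0 < C + 1 := by linarith
    have hne : C + 1 ≠ 0 := ne_of_gt hC1
    field_simp at hk
    simp only [zero_mul] at hk
    nlinarith [mul_pos hC1 hC1, mul_pos hpos hpos, mul_pos (mul_pos hpos hpos) hC1]
  have : ‖y‖ = 0 := by nlinarith [sq_nonneg ‖y‖, norm_nonneg y]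
  simpa [hy] using norm_eq_zero.mp this

theorem stmt16 {H : Type*} [NormedAddCommGroup H] [InnerProductSpace ℂ H] [CompleteSpace H]
    (φ₁ φ₂ : H) (hφ₁ : ‖φ₁‖ = 1) (hφ₂ : ‖φ₂‖ = 1) (horth : ⟪φ₁, φ₂⟫_ℂ = 0)
    (A : H →L[ℂ] H) (hA : A.IsPositive) (hA1 : (1 - A).IsPositive)
    (hsharp : ⟪φ₁, A φ₁⟫_ℂ = 0 ∨ ⟪φ₁, A φ₁⟫_ℂ = 1)
    (c₁ c₂ : ℂ) (hc : ‖c₁‖ ^ 2 + ‖c₂‖ ^ 2 = 1) :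
    ⟪c₁ • φ₁ + c₂ • φ₂, A (c₁ • φ₁ + c₂ • φ₂)⟫_ℂ
      = (‖c₁‖ ^ 2 : ℂ) * ⟪φ₁, A φ₁⟫_ℂ + (‖c₂‖ ^ 2 : ℂ) * ⟪φ₂, A φ₂⟫_ℂ := by
  have hsym : ∀ u v : H, ⟪A u, v⟫_ℂ = ⟪u, A v⟫_ℂ := fun u v => hA.1 u v
  have hself : ⟪φ₁, φ₁⟫_ℂ = 1 := by
    rw [inner_self_eq_norm_sq_to_K, hφ₁]; norm_num
  -- Aφ₁ is a multiple of φ₁ in both cases; key: cross terms vanish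
  have hcross : ⟪φ₂, A φ₁⟫_ℂ = 0 ∧ ⟪φ₁, A φ₂⟫_ℂ = 0 := by
    rcases hsharp with h0 | h1
    · have hz : A φ₁ = 0 := pos_apply_eq_zero A hA φ₁ h0
      constructor
      · rw [hz, inner_zero_right]
      · rw [← hsym, hz, inner_zero_left]
    · have hz : (1 - A) φ₁ = 0 := by
        apply pos_apply_eq_zero (1 - A) hA1 φ₁
        simp [inner_sub_right, hself, h1, hφ₁]
      have hfix : A φ₁ = φ₁ := by
        have := hz
        simp only [ContinuousLinearMap.sub_apply, ContinuousLinearMap.one_apply,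
          sub_eq_zero] at this
        exact this.symm
      constructor
      · rw [hfix, ← inner_conj_symm, horth, map_zero]
      · rw [← hsym, hfix, horth]
  obtain ⟨h21, h12⟩ := hcross
  have hc1 : (starRingEnd ℂ) c₁ * c₁ = ((‖c₁‖ : ℂ)) ^ 2 := by
    rw [mul_comm, Complex.mul_conj']
  have hc2 : (starRingEnd ℂ) c₂ * c₂ = ((‖c₂‖ : ℂ)) ^ 2 := by
    rw [mul_comm, Complex.mul_conj']
  rw [map_add, map_smul, map_smul]
  simp only [inner_add_left, inner_add_right, inner_smul_left, inner_smul_right,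
    h21, h12, mul_zero, add_zero, zero_add]
  linear_combination ⟪φ₁, A φ₁⟫_ℂ * hc1 + ⟪φ₂, A φ₂⟫_ℂ * hc2
end
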